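/- The function f(x) = (1+x)^{1/2} / ₂F₁(−1/2, −1/2; 1; x) is strictly increasing on the interval (0, 1). -/

import Mathlib

open Polynomial Filter Finset Set

noncomputable def twoF1 (a b c x : ℝ) : ℝ :=
  ∑' n : ℕ, ((ascPochhammer ℝ n).eval a * (ascPochhammer ℝ n).eval b) /
    ((ascPochhammer ℝ n).eval c * (n.factorial : ℝ)) * x ^ n

namespace F2aux

noncomputable def c (n : ℕ) : ℝ :=
  ((ascPochhammer ℝ n).eval (-1/2 : ℝ) / (n.factorial : ℝ)) ^ 2

lemma c_zero : c 0 = 1 := by simp [c]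

lemma c_one : c 1 = 1/4 := by norm_num [c, ascPochhammer_one]

lemma c_nonneg (n : ℕ) : 0 ≤ c n := sq_nonneg _

lemma asc_ne (n : ℕ) : (ascPochhammer ℝ n).eval (-1/2 : ℝ) ≠ 0 := by
  induction n with
  | zero => simp
  | succ n ih =>
    rw [ascPochhammer_succ_eval]
    refine mul_ne_zero ih ?_
    rcases Nat.eq_zero_or_pos n with h | h
    · subst h; norm_num
    · have : (1:ℝ) ≤ n := by exact_mod_cast h
      intro hc; linarith [this]

lemma c_pos (n : ℕ) : 0 < c n := by
  have h1 := asc_ne n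
  have h2 : (n.factorial : ℝ) ≠ 0 := by positivity
  have h3 : (ascPochhammer ℝ n).eval (-1/2 : ℝ) / (n.factorial : ℝ) ≠ 0 := div_ne_zero h1 h2
  exact lt_of_le_of_ne (sq_nonneg _) (Ne.symm (pow_ne_zero 2 h3))

lemma c_rec (n : ℕ) : c (n+1) * (4 * ((n:ℝ)+1)^2) = c n * (2*(n:ℝ)-1)^2 := by
  have h1 : (ascPochhammer ℝ (n+1)).eval (-1/2:ℝ)
      = (ascPochhammer ℝ n).eval (-1/2:ℝ) * (-1/2 + (n:ℝ)) := by
    rw [ascPochhammer_succ_eval]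
  have h2 : (n.factorial : ℝ) ≠ 0 := by positivity
  have h3 : ((n+1).factorial : ℝ) = ((n:ℝ)+1) * n.factorial := by
    rw [Nat.factorial_succ]; push_cast; ring
  have h4 : ((n:ℝ)+1) ≠ 0 := by positivity
  rw [c, c, h1, h3]
  field_simp
  ring

lemma c_cube (n : ℕ) : c (n+1) * (4 * ((n:ℝ)+1)^3) ≤ 1 := by
  induction n with
  | zero => norm_num [c_one]
  | succ n ih =>
    have h := c_rec (n+1)
    have hn : (0:ℝ) ≤ (n:ℝ) := n.cast_nonneg
    have key : (2*((n:ℝ)+1)-1)^2*((n:ℝ)+2) ≤ 4*((n:ℝ)+1)^3 := by nlinarith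
    have h5 := mul_le_mul_of_nonneg_left key (c_nonneg (n+1))
    push_cast at h ⊢
    nlinarith [c_nonneg (n+2), c_nonneg (n+1)]

lemma c_le_one (n : ℕ) : c n ≤ 1 := by
  induction n with
  | zero => simp [c_zero]
  | succ n ih =>
    have h := c_rec n
    have hn : (0:ℝ) ≤ (n:ℝ) := n.cast_nonneg
    nlinarith [c_nonneg n, c_nonneg (n+1)]


noncomputable def g (n : ℕ) : ℝ := (1 - 2*(n:ℝ)) * c n - 2*((n:ℝ)+1) * c (n+1)

noncomputable def t (n : ℕ) : ℝ := 2*(n:ℝ)*(1-2*(n:ℝ)) * c n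

lemma g_eq (n : ℕ) : g n = t n - t (n+1) := by
  have h := c_rec n
  simp only [g, t]
  push_cast
  nlinarith [h]

lemma t_zero : t 0 = 0 := by simp [t]

lemma sum_g (N : ℕ) : ∑ n ∈ Finset.range N, g n = - t N := by
  simp_rw [g_eq]
  rw [Finset.sum_range_sub' t N, t_zero]
  ring

lemma g_zero : g 0 = 1/2 := by norm_num [g, c_zero, c_one]

lemma g_neg (n : ℕ) : g (n+1) < 0 := by
  have h1 := c_pos (n+1)
  have h2 := c_pos (n+2)
  have hn : (0:ℝ) ≤ (n:ℝ) := n.cast_nonneg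
  simp only [g]
  push_cast
  nlinarith

lemma t_nonpos (n : ℕ) : t n ≤ 0 := by
  cases n with
  | zero => simp [t_zero]
  | succ n =>
    have h1 := c_nonneg (n+1)
    have hn : (0:ℝ) ≤ (n:ℝ) := n.cast_nonneg
    simp only [t]
    push_cast
    have : 2*((n:ℝ)+1)*(1-2*((n:ℝ)+1)) * c (n+1)
        = -(2*((n:ℝ)+1)*(2*(n:ℝ)+1) * c (n+1)) := by ring
    rw [this, neg_nonpos]
    have h2 : (0:ℝ) ≤ 2*((n:ℝ)+1)*(2*(n:ℝ)+1) := by nlinarith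
    exact mul_nonneg h2 h1

lemma neg_t_le (n : ℕ) : -t (n+1) ≤ 1/((n:ℝ)+1) := by
  have h1 := c_cube n
  have h2 := c_nonneg (n+1)
  have hn : (0:ℝ) ≤ (n:ℝ) := n.cast_nonneg
  have hpos : (0:ℝ) < (n:ℝ)+1 := by positivity
  have key : (2*((n:ℝ)+1)^2*(2*(n:ℝ)+1)) * c (n+1) ≤ 1 := by
    have hle : 2*((n:ℝ)+1)^2*(2*(n:ℝ)+1) ≤ 4*((n:ℝ)+1)^3 := by nlinarith
    calc (2*((n:ℝ)+1)^2*(2*(n:ℝ)+1)) * c (n+1) ≤ (4*((n:ℝ)+1)^3) * c (n+1) :=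
          mul_le_mul_of_nonneg_right hle h2
    _ ≤ 1 := by linarith [c_cube n]
  rw [le_div_iff₀ hpos]
  simp only [t]
  push_cast
  nlinarith [key]
lemma t_tendsto : Tendsto t atTop (nhds 0) := by
  apply squeeze_zero_norm' (a := fun n : ℕ => 1/(n:ℝ))
  · filter_upwards [eventually_ge_atTop 1] with n hn
    obtain ⟨m, rfl⟩ := Nat.exists_eq_add_of_le hn
    rw [Real.norm_eq_abs, abs_of_nonpos (t_nonpos _)]
    have := neg_t_le m
    have h1 : ((1+m : ℕ) : ℝ) = (m:ℝ)+1 := by push_cast; ring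
    rw [h1]
    calc -t (1+m) = -t (m+1) := by rw [Nat.add_comm]
    _ ≤ 1/((m:ℝ)+1) := neg_t_le m
  · exact tendsto_one_div_atTop_nhds_zero_nat

lemma g_shift_nonneg (n : ℕ) : 0 ≤ -g (n+1) := by linarith [g_neg n]

lemma g_summable : Summable g := by
  have h2 : ∀ N, ∑ n ∈ Finset.range N, -g (n+1) ≤ 1/2 := by
    intro N
    have h3 : ∑ n ∈ Finset.range (N+1), g n
        = (∑ n ∈ Finset.range N, g (n+1)) + g 0 := Finset.sum_range_succ' g N
    have h4 := sum_g (N+1)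
    have h5 := t_nonpos (N+1)
    rw [Finset.sum_neg_distrib]
    have : ∑ n ∈ Finset.range N, g (n+1) = -t (N+1) - g 0 := by
      rw [h3] at h4
      linarith [h4]
    rw [this, g_zero]
    linarith
  have hs := summable_of_sum_range_le g_shift_nonneg h2
  have : Summable (fun n => g (n+1)) := by
    have := hs.neg
    simpa using this
  exact (summable_nat_add_iff 1).mp this

lemma g_hasSum : HasSum g 0 := by
  rw [g_summable.hasSum_iff_tendsto_nat]
  have : (fun N => ∑ n ∈ Finset.range N, g n) = fun N => -t N := by
    funext N; exact sum_g N
  rw [this]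
  simpa using t_tendsto.neg


noncomputable def F (x : ℝ) : ℝ := ∑' n : ℕ, c n * x ^ n

noncomputable def D (x : ℝ) : ℝ := ∑' n : ℕ, ((n:ℝ)+1) * c (n+1) * x ^ n

lemma summable_aux {x : ℝ} (hx : |x| < 1) (b : ℕ → ℝ) (K : ℝ)
    (hb : ∀ n, |b n| ≤ K * ((n:ℝ)+1)) : Summable (fun n => b n * x ^ n) := by
  refine Summable.of_norm_bounded (g := fun n => K * (((n:ℝ)+1) * |x| ^ n)) ?_ ?_
  · have h1 : Summable (fun n : ℕ => (n:ℝ) * |x| ^ n) := by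
      simpa using summable_pow_mul_geometric_of_norm_lt_one (R := ℝ) 1 (r := |x|)
        (by simpa using hx)
    have h2 : Summable (fun n : ℕ => |x| ^ n) :=
      summable_geometric_of_lt_one (abs_nonneg x) hx
    apply Summable.mul_left K
    simpa [add_mul] using h1.add h2
  · intro n
    show |b n * x ^ n| ≤ K * ((↑n + 1) * |x| ^ n)
    rw [abs_mul, abs_pow, ← mul_assoc]
    exact mul_le_mul_of_nonneg_right (hb n) (by positivity)

lemma abs_c_le (n : ℕ) : |c n| ≤ 1 * ((n:ℝ)+1) := by
  rw [abs_of_nonneg (c_nonneg n), one_mul]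
  have h : (0:ℝ) ≤ (n:ℝ) := n.cast_nonneg
  linarith [c_le_one n]

lemma summable_cF {x : ℝ} (hx : |x| < 1) : Summable (fun n => c n * x ^ n) :=
  summable_aux hx _ 1 abs_c_le

lemma summable_D {x : ℝ} (hx : |x| < 1) :
    Summable (fun n : ℕ => ((n:ℝ)+1) * c (n+1) * x ^ n) := by
  refine summable_aux hx _ 1 (fun n => ?_)
  have h1 := c_nonneg (n+1)
  have h2 := c_le_one (n+1)
  have h : (0:ℝ) ≤ (n:ℝ)+1 := by positivity
  rw [abs_of_nonneg (by positivity), one_mul]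
  nlinarith

lemma summable_ncn {x : ℝ} (hx : |x| < 1) :
    Summable (fun n : ℕ => 2*(n:ℝ) * c n * x ^ n) := by
  refine summable_aux hx _ 2 (fun n => ?_)
  have h1 := c_nonneg n
  have h2 := c_le_one n
  have h : (0:ℝ) ≤ (n:ℝ) := n.cast_nonneg
  rw [abs_of_nonneg (by positivity)]
  nlinarith

lemma summable_gx {x : ℝ} (hx : |x| ≤ 1) : Summable (fun n => g n * x ^ n) := by
  refine Summable.of_norm_bounded (g := fun n => |g n|) g_summable.abs (fun n => ?_)
  rw [norm_mul, norm_pow, Real.norm_eq_abs, Real.norm_eq_abs]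
  calc |g n| * |x| ^ n ≤ |g n| * 1 :=
        mul_le_mul_of_nonneg_left (pow_le_one₀ (abs_nonneg x) hx) (abs_nonneg _)
  _ = |g n| := mul_one _

lemma summable_deriv_terms {x : ℝ} (hx : |x| < 1) :
    Summable (fun n : ℕ => c n * ((n:ℝ) * x ^ (n-1))) := by
  refine (summable_nat_add_iff 1).mp ?_
  have : Summable (fun n : ℕ => (((n:ℝ)+1) * c (n+1)) * x ^ n) := (summable_D hx).congr (fun n => by ring)
  refine this.congr (fun n => ?_)
  simp only [Nat.cast_add, Nat.cast_one, Nat.add_sub_cancel]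
  ring

set_option maxHeartbeats 1600000 in
lemma F_hasDerivAt {x : ℝ} (hx : |x| < 1) : HasDerivAt F (D x) x := by
  obtain ⟨r, hr0, hxr, hr1⟩ : ∃ r : ℝ, 0 < r ∧ |x| < r ∧ r < 1 :=
    ⟨(|x|+1)/2, by positivity, by linarith [abs_nonneg x], by linarith⟩
  have hu : Summable (fun n : ℕ => ((n:ℝ) * r ^ n)/r) := by
    have := (summable_pow_mul_geometric_of_norm_lt_one (R := ℝ) 1 (r := r) (by
        rw [Real.norm_eq_abs, abs_of_pos hr0]; exact hr1)).div_const r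
    exact this.congr (fun n => by simp [pow_one])
  have hg : ∀ (n : ℕ), ∀ y ∈ Set.Ioo (-r) r,
      HasDerivAt (fun z : ℝ => c n * z ^ n) (c n * ((n:ℝ) * y ^ (n-1))) y :=
    fun n y _ => (hasDerivAt_pow n y).const_mul (c n)
  have hg' : ∀ (n : ℕ), ∀ y ∈ Set.Ioo (-r) r,
      ‖c n * ((n:ℝ) * y ^ (n-1))‖ ≤ ((n:ℝ) * r ^ n)/r := by
    intro n y hy
    rcases Nat.eq_zero_or_pos n with h | h
    · subst h; simp [hr0.le]
    · have hyr : |y| ≤ r := by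
        rw [abs_le]; constructor <;> [linarith [hy.1]; linarith [hy.2]]
      rw [norm_mul, norm_mul, Real.norm_eq_abs, Real.norm_eq_abs, Real.norm_eq_abs]
      have h1 : |c n| ≤ 1 := by rw [abs_of_nonneg (c_nonneg n)]; exact c_le_one n
      have h2 : |y ^ (n-1)| ≤ r ^ (n-1) := by
        rw [abs_pow]
        exact pow_le_pow_left₀ (abs_nonneg y) hyr _
      have h3 : r ^ (n-1) = r ^ n / r := by
        rw [eq_div_iff hr0.ne', ← pow_succ]
        congr 1
        omega
      have h4 : (0:ℝ) ≤ (n:ℝ) := n.cast_nonneg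
      calc |c n| * (|(n:ℝ)| * |y ^ (n-1)|) ≤ 1 * (|(n:ℝ)| * |y ^ (n-1)|) :=
            mul_le_mul_of_nonneg_right h1 (by positivity)
      _ = (n:ℝ) * |y ^ (n-1)| := by rw [one_mul, abs_of_nonneg h4]
      _ ≤ (n:ℝ) * (r ^ n / r) := by
            rw [← h3]; exact mul_le_mul_of_nonneg_left h2 h4
      _ = (n:ℝ) * r ^ n / r := by ring
  have hmem : x ∈ Set.Ioo (-r) r := by
    rw [Set.mem_Ioo]; constructor <;> [linarith [neg_abs_le x]; linarith [le_abs_self x]]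
  have key : HasDerivAt (fun z => ∑' n : ℕ, c n * z ^ n)
      (∑' n : ℕ, c n * ((n:ℝ) * x ^ (n-1))) x :=
    hasDerivAt_tsum_of_isPreconnected hu isOpen_Ioo (convex_Ioo _ _).isPreconnected
      hg hg' hmem (summable_cF hx) hmem
  have hshift : (∑' n : ℕ, c n * ((n:ℝ) * x ^ (n-1))) = D x := by
    rw [Summable.tsum_eq_zero_add (summable_deriv_terms hx)]
    have h0 : c 0 * (((0:ℕ):ℝ) * x ^ (0-1)) = 0 := by norm_num
    rw [h0, zero_add]
    unfold D
    refine tsum_congr (fun n => ?_)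
    simp only [Nat.cast_add, Nat.cast_one, Nat.add_sub_cancel]
    ring
  have : F = fun z => ∑' n : ℕ, c n * z ^ n := rfl
  rw [this, ← hshift]
  exact key


lemma abs_lt_one {x : ℝ} (hx : x ∈ Set.Ioo (0:ℝ) 1) : |x| < 1 := by
  rw [abs_lt]; exact ⟨by linarith [hx.1], hx.2⟩

lemma key {x : ℝ} (hx : x ∈ Set.Ioo (0:ℝ) 1) : 2*(1+x) * D x < F x := by
  have hx1 : |x| < 1 := abs_lt_one hx
  have hxD : 2 * x * D x = ∑' n : ℕ, 2*(n:ℝ) * c n * x ^ n := by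
    rw [Summable.tsum_eq_zero_add (summable_ncn hx1)]
    simp only [Nat.cast_zero, mul_zero, zero_mul, zero_add, Nat.cast_add, Nat.cast_one]
    rw [D, ← tsum_mul_left]
    exact tsum_congr fun n => by ring
  have h2D : 2 * D x = ∑' n : ℕ, 2 * (((n:ℝ)+1) * c (n+1) * x ^ n) := by
    rw [D, ← tsum_mul_left]
  have hdiff : F x - 2*(1+x) * D x = ∑' n : ℕ, g n * x ^ n := by
    have e1 : 2*(1+x) * D x = 2 * D x + 2 * x * D x := by ring
    rw [e1, hxD, h2D, F, sub_add_eq_sub_sub]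
    rw [← Summable.tsum_sub (summable_cF hx1) ((summable_D hx1).mul_left 2),
        ← Summable.tsum_sub (((summable_cF hx1).sub ((summable_D hx1).mul_left 2)))
          (summable_ncn hx1)]
    exact tsum_congr fun n => by rw [g]; ring
  have hlt : (0:ℝ) < ∑' n : ℕ, g n * x ^ n := by
    have h0 : (0:ℝ) = ∑' n, g n := g_hasSum.tsum_eq.symm
    rw [h0]
    refine Summable.tsum_lt_tsum (i := 1) (f := g) (g := fun n => g n * x ^ n) ?_ ?_
      g_summable (summable_gx hx1.le)
    · intro n
      cases n with
      | zero => simp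
      | succ n =>
        show g (n+1) ≤ g (n+1) * x ^ (n+1)
        have h1 := g_neg n
        have h2 : x ^ (n+1) ≤ 1 := pow_le_one₀ (by linarith [hx.1]) hx.2.le
        nlinarith
    · show g 1 < g 1 * x ^ 1
      have h1 := g_neg 0
      have h2 : x ^ 1 < 1 := by rw [pow_one]; exact hx.2
      nlinarith
  linarith [hdiff ▸ hlt]

lemma F_ge_one {x : ℝ} (hx0 : 0 ≤ x) (hx1 : |x| < 1) : 1 ≤ F x := by
  have h := Summable.le_tsum (summable_cF hx1) 0 (fun i _ => mul_nonneg (c_nonneg i) (pow_nonneg hx0 i))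
  simpa [c_zero, F] using h

lemma quot_hasDerivAt {x : ℝ} (hx : x ∈ Set.Ioo (0:ℝ) 1) :
    HasDerivAt (fun y : ℝ => (1+y) ^ ((1:ℝ)/2) / F y)
      (((1 * ((1:ℝ)/2) * (1+x)^((1:ℝ)/2 - 1)) * F x - (1+x)^((1:ℝ)/2) * D x) / (F x)^2) x := by
  have hx1 : |x| < 1 := abs_lt_one hx
  have h1x : (0:ℝ) < 1 + x := by linarith [hx.1]
  have hb : HasDerivAt (fun y : ℝ => 1 + y) 1 x := (hasDerivAt_id x).const_add 1
  have hu : HasDerivAt (fun y : ℝ => (1+y) ^ ((1:ℝ)/2))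
      (1 * ((1:ℝ)/2) * (1+x)^((1:ℝ)/2 - 1)) x := hb.rpow_const (Or.inl h1x.ne')
  have hFx : F x ≠ 0 := by linarith [F_ge_one hx.1.le hx1]
  exact hu.div (F_hasDerivAt hx1) hFx

lemma deriv_pos {x : ℝ} (hx : x ∈ Set.Ioo (0:ℝ) 1) :
    0 < ((1 * ((1:ℝ)/2) * (1+x)^((1:ℝ)/2 - 1)) * F x - (1+x)^((1:ℝ)/2) * D x) / (F x)^2 := by
  have hx1 : |x| < 1 := abs_lt_one hx
  have h1x : (0:ℝ) < 1 + x := by linarith [hx.1]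
  have hsplit : (1+x)^((1:ℝ)/2) = (1+x) * (1+x)^((1:ℝ)/2 - 1) := by
    have h : (1:ℝ)/2 = 1 + ((1:ℝ)/2 - 1) := by norm_num
    conv_lhs => rw [h]
    rw [Real.rpow_add h1x, Real.rpow_one]
  have hk := key hx
  have hrp : 0 < (1+x)^((1:ℝ)/2 - 1) := Real.rpow_pos_of_pos h1x _
  have hnum : 0 < (1 * ((1:ℝ)/2) * (1+x)^((1:ℝ)/2 - 1)) * F x - (1+x)^((1:ℝ)/2) * D x := by
    rw [hsplit]
    have : (1 * ((1:ℝ)/2) * (1+x)^((1:ℝ)/2 - 1)) * F x - (1+x) * (1+x)^((1:ℝ)/2 - 1) * D x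
        = (1+x)^((1:ℝ)/2 - 1) * (((1:ℝ)/2) * (F x - 2*(1+x) * D x)) := by ring
    rw [this]
    exact mul_pos hrp (by linarith)
  have hF1 := F_ge_one hx.1.le hx1
  exact div_pos hnum (by positivity)


end F2aux

theorem f_strictMono :
    StrictMonoOn (fun x : ℝ => (1 + x) ^ ((1:ℝ)/2) / twoF1 (-1/2) (-1/2) 1 x)
      (Set.Ioo 0 1) := by
  have hfun : (fun x : ℝ => (1 + x) ^ ((1:ℝ)/2) / twoF1 (-1/2) (-1/2) 1 x)
      = fun x : ℝ => (1 + x) ^ ((1:ℝ)/2) / F2aux.F x := by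
    funext x
    congr 1
    unfold twoF1 F2aux.F
    refine tsum_congr fun n => ?_
    congr 1
    rw [F2aux.c, ascPochhammer_eval_one]
    have h2 : (n.factorial : ℝ) ≠ 0 := by positivity
    field_simp
  rw [hfun]
  apply strictMonoOn_of_deriv_pos (convex_Ioo 0 1)
  · intro x hx
    exact ((F2aux.quot_hasDerivAt hx).continuousAt).continuousWithinAt
  · intro x hx
    rw [interior_Ioo] at hx
    rw [(F2aux.quot_hasDerivAt hx).deriv]
    exact F2aux.deriv_pos hx
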